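/- arXiv:2106.10521 — 3 statements merged into one kernel-verified Lean document; each statement's English description precedes it below -/
import Mathlib

section
/- All basic zone tariffs with respect to a price function P satisfy the no-elongation property if and only if P is increasing (i.e., monotone nondecreasing). -/
open scoped Classical

/-- A path in a graph given by adjacency relation `adj`: a nonempty list of
consecutively adjacent nodes. -/
def IsPath {V : Type*} (adj : V → V → Prop) (W : List V) : Prop :=
  W ≠ [] ∧ W.Chain' adj

/-- An `x`-`y`-path. -/
def IsXYPath {V : Type*} (adj : V → V → Prop) (x y : V) (W : List V) : Prop :=
  IsPath adj W ∧ W.head? = some x ∧ W.getLast? = some y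

/-- `W` decomposes as the concatenation `W₁ + W₂` (the last node of `W₁` is the
first node of `W₂`). -/
def Splits {V : Type*} (W W₁ W₂ : List V) : Prop :=
  W₁ ≠ [] ∧ W₂ ≠ [] ∧ W₁.getLast? = W₂.head? ∧ W = W₁ ++ W₂.tail

/-- `W` splits at an intermediate node into `W₁ + W₂` (both parts have at least
two nodes). -/
def SplitsAt {V : Type*} (W W₁ W₂ : List V) : Prop :=
  2 ≤ W₁.length ∧ 2 ≤ W₂.length ∧ W₁.getLast? = W₂.head? ∧ W = W₁ ++ W₂.tail

/-- The no-stopover property: splitting a path at an intermediate node never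
decreases the total price. -/
def NoStopover {V : Type*} (adj : V → V → Prop) (p : List V → ℝ) : Prop :=
  ∀ W W₁ W₂ : List V, IsPath adj W → IsPath adj W₁ → IsPath adj W₂ →
    SplitsAt W W₁ W₂ → p W ≤ p W₁ + p W₂

/-- The no-elongation property: removing the last node of a path never
increases the price. -/
def NoElongation {V : Type*} (adj : V → V → Prop) (p : List V → ℝ) : Prop :=
  ∀ W : List V, IsPath adj W → 2 ≤ W.length → p W.dropLast ≤ p W

/-- Number of zone borders crossed by a path (basic zone tariff). -/
noncomputable def zoneBorders {V Z : Type*} (zone : V → Z) : List V → ℕ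
  | x :: y :: rest => (if zone x = zone y then 0 else 1) + zoneBorders zone (y :: rest)
  | _ => 0

lemma zb_dropLast {V Z : Type*} (zone : V → Z) :
    ∀ W : List V, zoneBorders zone W.dropLast ≤ zoneBorders zone W
  | [] => le_refl _
  | [_] => by simp [zoneBorders]
  | [_, _] => by simp [zoneBorders]
  | x :: y :: z :: rs => by
      have ih := zb_dropLast zone (y :: z :: rs)
      simp only [List.dropLast_cons₂, zoneBorders] at *
      omega

lemma chain'_true {α : Type*} : ∀ L : List α, L.Chain' (fun _ _ => True)
  | [] => List.isChain_nil
  | [_] => List.isChain_singleton _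
  | _ :: b :: rs => List.IsChain.cons_cons trivial (chain'_true (b :: rs))

lemma zb_range' : ∀ (n a : ℕ), zoneBorders (id : ℕ → ℕ) (List.range' a (n+1)) = n
  | 0, a => by simp [List.range', zoneBorders]
  | n+1, a => by
      have ih := zb_range' n (a+1)
      rw [List.range'_succ, List.range'_succ] at *
      simp only [zoneBorders, id] at *
      rw [if_neg (by omega)]
      omega

lemma zb_range (n : ℕ) : zoneBorders (id : ℕ → ℕ) (List.range (n+1)) = n := by
  rw [List.range_eq_range']; exact zb_range' n 0

/-- All basic zone tariffs w.r.t. a price function `P` satisfy the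
no-elongation property if and only if `P` is increasing (monotone
nondecreasing on `ℕ≥1`). -/
theorem basic_zone_no_elongation_iff (P : ℕ → ℝ) :
    (∀ (V Z : Type) (adj : V → V → Prop) (zone : V → Z),
        NoElongation adj (fun W => P (1 + zoneBorders zone W))) ↔
      (∀ k l : ℕ, 1 ≤ k → k ≤ l → P k ≤ P l) := by
  constructor
  · intro h k l hk hkl
    have step : ∀ m : ℕ, 1 ≤ m → P m ≤ P (m + 1) := by
      intro m hm
      obtain ⟨m', rfl⟩ := Nat.exists_eq_add_of_le hm
      have hp : IsPath (fun _ _ : ℕ => True) (List.range (1 + m' + 1)) :=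
        by
          refine ⟨?_, chain'_true _⟩
          simp [List.range_eq_nil]
      have hlen : 2 ≤ (List.range (1 + m' + 1)).length := by simp
      have := h ℕ ℕ (fun _ _ => True) id (List.range (1 + m' + 1)) hp hlen
      simp only at this
      rw [zb_range, List.range_succ, List.dropLast_concat, Nat.add_comm 1 m',
        zb_range] at this
      convert this using 2
      omega
    induction l, hkl using Nat.le_induction with
    | base => exact le_refl _
    | succ n hn ih => exact le_trans ih (step n (le_trans hk hn))
  · intro hP V Z adj zone W _ _
    exact hP _ _ (by omega) (by have := zb_dropLast zone W; omega)
end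

section
/- Fix an increasing price function P. All zone tariffs without double counting with respect to P satisfy the no-stopover property if and only if P(k) ≤ P(i) + P(k−i+1) for all k ≥ 1 and i ∈ {1,...,k}. -/
open scoped Classical

/-- Number of distinct zones visited by a path (zone tariff without double
counting). -/
noncomputable def distinctZones {V Z : Type*} (zone : V → Z) (W : List V) : ℕ :=
  (zone '' { v | v ∈ W }).ncard

lemma chain'_true_s16 {V : Type*} (l : List V) : l.Chain' (fun _ _ => True) := by
  induction l with
  | nil => exact List.isChain_nil
  | cons a l ih => cases l with
    | nil => exact List.isChain_singleton _
    | cons b m => exact List.isChain_cons_cons.2 ⟨trivial, ih⟩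

lemma dz_eq {V Z : Type*} (zone : V → Z) (l : List V) :
    distinctZones zone l = (l.toFinset.image zone).card := by
  unfold distinctZones
  rw [show {v | v ∈ l} = (↑l.toFinset : Set V) by ext v; simp,
    ← Finset.coe_image, Set.ncard_coe_finset]

lemma dz_pos {V Z : Type*} (zone : V → Z) (l : List V) (h : l ≠ []) :
    1 ≤ distinctZones zone l := by
  rw [dz_eq]
  refine Finset.card_pos.2 ?_
  obtain ⟨a, m, rfl⟩ := List.exists_cons_of_ne_nil h
  exact ⟨zone a, by simp⟩

lemma dz_id (l : List ℕ) (h : l.Nodup) : distinctZones id l = l.length := by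
  unfold distinctZones
  rw [Set.image_id, show {v | v ∈ l} = (↑l.toFinset : Set ℕ) by ext v; simp,
    Set.ncard_coe_finset, List.toFinset_card_of_nodup h]

lemma dz_split {V Z : Type*} (zone : V → Z) (W W₁ W₂ : List V)
    (h1 : W₁ ≠ []) (h3 : W₁.getLast? = W₂.head?) (h4 : W = W₁ ++ W₂.tail) :
    distinctZones zone W + 1 ≤ distinctZones zone W₁ + distinctZones zone W₂ := by
  rw [dz_eq, dz_eq, dz_eq]
  set A := W₁.toFinset.image zone
  set B := W₂.toFinset.image zone
  obtain ⟨v, hv⟩ : ∃ v, W₁.getLast? = some v := by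
    cases e : W₁.getLast? with
    | none => exact absurd (List.getLast?_eq_none_iff.1 e) h1
    | some v => exact ⟨v, rfl⟩
  have hvA : zone v ∈ A := Finset.mem_image_of_mem _
    (List.mem_toFinset.2 (List.mem_of_getLast? hv))
  have hvB : zone v ∈ B := Finset.mem_image_of_mem _
    (List.mem_toFinset.2 (List.mem_of_mem_head? (by rw [← h3, hv]; exact rfl)))
  have hsub : W.toFinset.image zone ⊆ A ∪ B := by
    intro x hx
    obtain ⟨u, hu, rfl⟩ := Finset.mem_image.1 hx
    rw [List.mem_toFinset, h4, List.mem_append] at hu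
    rcases hu with hu | hu
    · exact Finset.mem_union_left _ (Finset.mem_image_of_mem _ (List.mem_toFinset.2 hu))
    · exact Finset.mem_union_right _ (Finset.mem_image_of_mem _
        (List.mem_toFinset.2 (List.mem_of_mem_tail hu)))
  have h5 : (W.toFinset.image zone).card ≤ (A ∪ B).card := Finset.card_le_card hsub
  have h6 : (A ∪ B).card + (A ∩ B).card = A.card + B.card :=
    Finset.card_union_add_card_inter A B
  have h7 : 1 ≤ (A ∩ B).card :=
    Finset.card_pos.2 ⟨zone v, Finset.mem_inter.2 ⟨hvA, hvB⟩⟩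
  omega

/-- Fix an increasing price function `P`. All zone tariffs without double
counting w.r.t. `P` satisfy the no-stopover property if and only if
`P(k) ≤ P(i) + P(k−i+1)` for all `k ≥ 1` and `i ∈ {1,…,k}`. -/
theorem no_double_counting_no_stopover_iff (P : ℕ → ℝ)
    (hmono : ∀ k l : ℕ, 1 ≤ k → k ≤ l → P k ≤ P l) :
    (∀ (V Z : Type) (adj : V → V → Prop) (zone : V → Z),
        NoStopover adj (fun W => P (distinctZones zone W))) ↔
      (∀ k i : ℕ, 1 ≤ k → 1 ≤ i → i ≤ k → P k ≤ P i + P (k - i + 1)) := by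
  constructor
  · intro h k i hk hi hik
    have H := h ℕ ℕ (fun _ _ => True) id
    have hP1 : 0 ≤ P 1 := by
      have := H [0,0,0] [0,0] [0,0] ⟨by simp, chain'_true_s16 _⟩ ⟨by simp, chain'_true_s16 _⟩
        ⟨by simp, chain'_true_s16 _⟩ ⟨by simp, by simp, by simp, rfl⟩
      have e1 : distinctZones id [(0:ℕ),0,0] = 1 := by
        unfold distinctZones
        rw [Set.image_id, show {v : ℕ | v ∈ [0,0,0]} = {0} by ext v; simp]
        exact Set.ncard_singleton 0
      have e2 : distinctZones id [(0:ℕ),0] = 1 := by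
        unfold distinctZones
        rw [Set.image_id, show {v : ℕ | v ∈ [0,0]} = {0} by ext v; simp]
        exact Set.ncard_singleton 0
      beta_reduce at this
      rw [e1, e2] at this
      linarith
    rcases eq_or_lt_of_le hi with h1 | h1
    · rw [← h1]
      have : P k ≤ P (k - 1 + 1) := hmono _ _ hk (by omega)
      linarith
    rcases eq_or_lt_of_le hik with h2 | h2
    · rw [show k - i + 1 = 1 by omega, ← h2]
      linarith
    have h2i : 2 ≤ i := h1
    obtain ⟨j, rfl⟩ : ∃ j, i = j + 1 := ⟨i - 1, by omega⟩
    set W₁ : List ℕ := List.range' 0 (j+1) with hW₁d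
    set W₂ : List ℕ := List.range' j (k - j) with hW₂d
    set W : List ℕ := List.range' 0 k with hWd
    have hW2 : W₂ = j :: List.range' (j+1) (k - (j+1)) := by
      rw [hW₂d, show k - j = (k - (j+1)) + 1 by omega, List.range'_succ]
    have hsplit : W = W₁ ++ W₂.tail := by
      rw [hW2]
      show List.range' 0 k = List.range' 0 (j+1) ++ List.range' (j+1) (k - (j+1))
      have := List.range'_append (s := 0) (m := j+1) (n := k - (j+1)) (step := 1)
      simp only [one_mul, zero_add] at this
      rw [this]
      congr 1
      omega
    have hlast : W₁.getLast? = some j := by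
      rw [hW₁d, List.range'_1_concat]
      simp
    have := H W W₁ W₂
      ⟨by simp [hWd]; omega, chain'_true_s16 _⟩
      ⟨by simp [hW₁d], chain'_true_s16 _⟩
      ⟨by rw [hW2]; simp, chain'_true_s16 _⟩
      ⟨by simp [hW₁d]; omega, by simp [hW₂d]; omega, by rw [hlast, hW2]; rfl, hsplit⟩
    beta_reduce at this
    rw [dz_id W (List.nodup_range' ..), dz_id W₁ (List.nodup_range' ..),
      dz_id W₂ (List.nodup_range' ..)] at this
    simp only [hWd, hW₁d, hW₂d, List.length_range'] at this
    convert this using 3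
    omega
  · intro h V Z adj zone W W₁ W₂ hW hW₁ hW₂ hs
    obtain ⟨h1, h2, h3, h4⟩ := hs
    have hn1 : W₁ ≠ [] := by intro e; rw [e] at h1; simp at h1
    have hn2 : W₂ ≠ [] := by intro e; rw [e] at h2; simp at h2
    set a := distinctZones zone W₁ with ha
    set b := distinctZones zone W₂ with hb
    set c := distinctZones zone W with hc
    have pa : 1 ≤ a := dz_pos zone W₁ hn1
    have pb : 1 ≤ b := dz_pos zone W₂ hn2
    have pc : 1 ≤ c := dz_pos zone W hW.1
    have key : c + 1 ≤ a + b := dz_split zone W W₁ W₂ hn1 h3 h4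
    have s1 : P c ≤ P (a + b - 1) := hmono _ _ pc (by omega)
    have s2 : P (a + b - 1) ≤ P a + P ((a + b - 1) - a + 1) :=
      h (a + b - 1) a (by omega) pa (by omega)
    rw [show (a + b - 1) - a + 1 = b by omega] at s2
    simp only
    linarith
end

section
/- In a graph with a zone partition in which every zone induces a connected subgraph, any x-y-path minimizing the number of zone-border crossings also minimizes the number of distinct zones visited; hence the Minimum-Zone Path problem is solvable in polynomial time via a shortest-path computation with 0/1 zone-border edge weights. -/
open scoped Classical

section ZoneAux

variable {V Z : Type*} (zone : V → Z)

lemma zoneBorders_cons_cons (a b : V) (L : List V) :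
    zoneBorders zone (a :: b :: L)
      = (if zone a = zone b then 0 else 1) + zoneBorders zone (b :: L) := rfl

lemma zoneBorders_append (A : List V) (v : V) (B : List V) :
    zoneBorders zone (A ++ v :: B)
      = zoneBorders zone (A ++ [v]) + zoneBorders zone (v :: B) := by
  induction A with
  | nil => simp [zoneBorders]
  | cons a A ih =>
    cases A with
    | nil => simp [zoneBorders_cons_cons, zoneBorders]
    | cons c A' =>
      simp only [List.cons_append, zoneBorders_cons_cons] at *
      omega

lemma zoneBorders_const (c : Z) : ∀ (L : List V), (∀ a ∈ L, zone a = c) →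
    zoneBorders zone L = 0
  | [] => fun _ => rfl
  | [a] => fun _ => rfl
  | a :: b :: L => fun h => by
    rw [zoneBorders_cons_cons, zoneBorders_const c (b :: L)
      (fun w hw => h w (List.mem_cons_of_mem a hw))]
    simp [h a (by simp), h b (by simp)]

lemma distinctZones_finite (W : List V) : (zone '' { v | v ∈ W }).Finite :=
  W.finite_toSet.image zone

lemma one_le_distinctZones {W : List V} (h : W ≠ []) : 1 ≤ distinctZones zone W := by
  rcases W with _ | ⟨a, L⟩
  · simp at h
  · exact (Set.ncard_pos (distinctZones_finite zone _)).mpr ⟨zone a, a, by simp, rfl⟩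

lemma distinctZones_le : ∀ (W : List V), W ≠ [] →
    distinctZones zone W ≤ zoneBorders zone W + 1
  | [] => fun h => absurd rfl h
  | [a] => fun _ => by simp [distinctZones, zoneBorders]
  | a :: b :: L => fun _ => by
    have ih := distinctZones_le (b :: L) (by simp)
    have hfin := distinctZones_finite zone (b :: L)
    have hins : zone '' {v | v ∈ a :: b :: L} = insert (zone a) (zone '' {v | v ∈ b :: L}) := by
      have : {v | v ∈ a :: b :: L} = insert a {v | v ∈ b :: L} := by ext w; simp
      rw [this, Set.image_insert_eq]
    rw [distinctZones, hins, zoneBorders_cons_cons]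
    by_cases hab : zone a = zone b
    · have hmem : zone a ∈ zone '' {v | v ∈ b :: L} := ⟨b, by simp, hab.symm⟩
      rw [Set.insert_eq_self.mpr hmem]
      rw [distinctZones] at ih
      rw [if_pos hab, Nat.zero_add]
      exact ih
    · calc (insert (zone a) (zone '' {v | v ∈ b :: L})).ncard
          ≤ (zone '' {v | v ∈ b :: L}).ncard + 1 := Set.ncard_insert_le _ _
        _ ≤ zoneBorders zone (b :: L) + 1 + 1 := by exact Nat.add_le_add_right ih 1
        _ = _ := by rw [if_neg hab]; omega

lemma exists_contig {V Z : Type*} (adj : V → V → Prop) (zone : V → Z)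
    (hconn : ∀ x y : V, zone x = zone y →
      ∃ W : List V, IsXYPath adj x y W ∧ ∀ v ∈ W, zone v = zone x) :
    ∀ (n : ℕ) (W' : List V) (x y : V), W'.length ≤ n → IsXYPath adj x y W' →
      ∃ W'', IsXYPath adj x y W'' ∧
        zoneBorders zone W'' + 1 ≤ distinctZones zone W' := by
  intro n
  induction n with
  | zero =>
    intro W' x y hlen hp
    exact absurd (List.length_eq_zero_iff.mp (Nat.le_zero.mp hlen)) hp.1.1
  | succ n ih =>
    intro W' x y hlen hp
    obtain ⟨⟨hne, hchain⟩, hhead, hlast⟩ := hp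
    have hxhd : W'.head hne = x := by
      rw [List.head?_eq_head hne] at hhead
      exact Option.some.inj hhead
    have hxW : x ∈ W' := hxhd ▸ List.head_mem hne
    set p : V → Bool := fun v => decide (zone v ≠ zone x) with hp_def
    have hDne : W'.reverse.dropWhile p ≠ [] := by
      intro h
      have := List.dropWhile_eq_nil_iff.mp h x (by simpa using hxW)
      simp [hp_def] at this
    rcases hDD : W'.reverse.dropWhile p with _ | ⟨v, D'⟩
    · exact absurd hDD hDne
    have hvz : zone v = zone x := by
      have h0 := List.head?_dropWhile_not p W'.reverse
      rw [hDD] at h0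
      simpa [hp_def] using h0
    have hW'eq : W' = (D'.reverse ++ [v]) ++ (W'.reverse.takeWhile p).reverse := by
      conv_lhs => rw [← W'.reverse_reverse,
        ← List.takeWhile_append_dropWhile (p := p) (l := W'.reverse)]
      rw [List.reverse_append, hDD]
      simp
    rcases hSS : (W'.reverse.takeWhile p).reverse with _ | ⟨u, T'⟩
    · -- no nodes after the last zone-x node: v = y
      rw [hSS] at hW'eq
      have hvy : v = y := by
        rw [hW'eq] at hlast
        simpa using hlast
      obtain ⟨P, hP, hPz⟩ := hconn x y (hvy ▸ hvz).symm
      refine ⟨P, hP, ?_⟩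
      rw [zoneBorders_const zone (zone x) P hPz]
      exact one_le_distinctZones zone hne
    · rw [hSS] at hW'eq
      have hW'T : W' = D'.reverse ++ v :: u :: T' := by
        rw [hW'eq]; simp
      -- u :: T' is a path from u to y
      have hchainT : (u :: T').Chain' adj :=
        hchain.suffix ⟨D'.reverse ++ [v], by rw [hW'T]; simp⟩
      have hadj : adj v u := by
        have hc : (v :: u :: T').Chain' adj :=
          hchain.suffix ⟨D'.reverse, by rw [hW'T]⟩
        exact (List.isChain_cons_cons.mp hc).1
      have hlastT : (u :: T').getLast? = some y := by
        rw [hW'T, List.getLast?_append] at hlast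
        rcases h2 : (u :: T').getLast? with _ | w
        · simp at h2
        · rw [List.getLast?_cons_cons, h2] at hlast
          simpa using hlast
      have hlenT : (u :: T').length ≤ n := by
        have := congrArg List.length hW'T
        simp at this ⊢
        omega
      obtain ⟨Rp, ⟨⟨hRne, hRch⟩, hRh, hRl⟩, hRb⟩ :=
        ih (u :: T') u y hlenT ⟨⟨by simp, hchainT⟩, rfl, hlastT⟩
      obtain ⟨P, ⟨⟨hPne, hPch⟩, hPh, hPl⟩, hPz⟩ := hconn x v hvz.symm
      rcases Rp with _ | ⟨u', Rp'⟩
      · exact absurd rfl hRne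
      have huu : u' = u := by simpa using hRh
      rw [huu] at hRch hRh hRl hRb
      -- zone of u differs from zone x
      have huS : u ∈ W'.reverse.takeWhile p := by
        have : u ∈ (W'.reverse.takeWhile p).reverse := by rw [hSS]; simp
        simpa using this
      have huz : zone u ≠ zone x := by
        have := List.mem_takeWhile_imp huS
        simpa [hp_def] using this
      refine ⟨P ++ u :: Rp', ⟨⟨by simp [hPne], ?_⟩, ?_, ?_⟩, ?_⟩
      · refine hPch.append hRch ?_
        intro a ha b hb
        rw [hPl] at ha
        have ha' : a = v := by simpa [eq_comm] using ha
        have hb' : b = u := by simpa [eq_comm] using hb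
        rw [ha', hb']
        exact hadj
      · rw [List.head?_append, hPh]; rfl
      · rw [List.getLast?_append, hRl]; rfl
      · -- zoneBorders computation
        have hPsplit : P.dropLast ++ [v] = P :=
          List.dropLast_append_getLast? v hPl
        have hrw : P ++ u :: Rp' = P.dropLast ++ v :: u :: Rp' := by
          rw [← hPsplit]; simp
        rw [hrw, zoneBorders_append, hPsplit,
          zoneBorders_const zone (zone x) P hPz,
          zoneBorders_cons_cons,
          if_neg (fun h : zone v = zone u => huz (h ▸ hvz))]
        -- now: 0 + (1 + zoneBorders (u :: Rp')) + 1 ≤ distinctZones W'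
        have hfinW : (zone '' {w | w ∈ W'}).Finite := distinctZones_finite zone W'
        have hfinT : (zone '' {w | w ∈ u :: T'}).Finite :=
          distinctZones_finite zone (u :: T')
        have hnot : zone x ∉ zone '' {w | w ∈ u :: T'} := by
          rintro ⟨w, hw, hwz⟩
          have hwS : w ∈ W'.reverse.takeWhile p := by
            have : w ∈ (W'.reverse.takeWhile p).reverse := by rw [hSS]; exact hw
            simpa using this
          have := List.mem_takeWhile_imp hwS
          simp [hp_def] at this
          exact this hwz
        have hsub : insert (zone x) (zone '' {w | w ∈ u :: T'}) ⊆
            zone '' {w | w ∈ W'} := by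
          refine Set.insert_subset ⟨x, hxW, rfl⟩ (Set.image_mono ?_)
          intro w hw
          rw [hW'T]
          simp only [Set.mem_setOf_eq] at hw ⊢
          simp [hw]
        have hcard : (zone '' {w | w ∈ u :: T'}).ncard + 1 ≤
            (zone '' {w | w ∈ W'}).ncard := by
          rw [← Set.ncard_insert_of_notMem hnot hfinT]
          exact Set.ncard_le_ncard hsub hfinW
        have hRb' : zoneBorders zone (u :: Rp') + 1 ≤
            (zone '' {w | w ∈ u :: T'}).ncard := hRb
        rw [distinctZones]
        omega

end ZoneAux

/-- If every zone of a zone partition induces a connected subgraph, then any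
`x`-`y`-path minimizing the number of zone-border crossings also minimizes the
number of distinct zones visited (so Minimum-Zone Path reduces to a shortest
path computation with 0/1 zone-border edge weights and is solvable in
polynomial time). -/
theorem connected_zones_min_border_min_zones {V Z : Type*}
    (adj : V → V → Prop) (zone : V → Z)
    (hconn : ∀ x y : V, zone x = zone y →
      ∃ W : List V, IsXYPath adj x y W ∧ ∀ v ∈ W, zone v = zone x)
    (x y : V) (W : List V) (hW : IsXYPath adj x y W)
    (hmin : ∀ W' : List V, IsXYPath adj x y W' →
      zoneBorders zone W ≤ zoneBorders zone W') :
    ∀ W' : List V, IsXYPath adj x y W' →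
      distinctZones zone W ≤ distinctZones zone W' := by
  intro W' hW'
  obtain ⟨W'', hW'', hb⟩ := exists_contig adj zone hconn W'.length W' x y le_rfl hW'
  calc distinctZones zone W ≤ zoneBorders zone W + 1 := distinctZones_le zone W hW.1.1
    _ ≤ zoneBorders zone W'' + 1 := Nat.add_le_add_right (hmin W'' hW'') 1
    _ ≤ distinctZones zone W' := hb
end
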